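/- Let b, σ : (0,∞) → ℝ with σ > 0, and suppose there exist constants δ ∈ (0,1), x_* ∈ (0,1) such that b(x) ≤ (1+δ)b'(0)x and (1-δ)|σ'(0)|²x² ≤ σ²(x) ≤ (1+δ)|σ'(0)|²x² for x ∈ (0,x_*), where κ := 2(1+δ)b'(0)/((1-δ)|σ'(0)|²) > 1. Then the function I(x) := (1/σ²(x))·∫₁^x exp(2∫_y^x b/σ² ds) dy is not integrable on (0, x_*). In particular, -I(x) ≥ C·(1/x - x^{κ-2}/x_*^{κ-1}) for x ∈ (0,x_*) with C = 1/((1+δ)(κ-1)|σ'(0)|²). -/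

import Mathlib

open MeasureTheory intervalIntegral

set_option maxHeartbeats 1000000 in
/-- Under near-0 comparability of `b` and `σ²` with their linearizations and `κ > 1`
(the case `Λ₀ > 0`), the second solution `I(x) = (1/σ²(x)) ∫₁^x exp(2∫_y^x b/σ²) dy`
of the stationary Fokker–Planck equation satisfies
`-I(x) ≥ C(1/x - x^{κ-2}/x_*^{κ-1})` on `(0,x_*)` and is not integrable there. -/
theorem stmt3 (b σ2 : ℝ → ℝ) (c s δ xs κ : ℝ)
    (hbc : ContinuousOn b (Set.Ioi 0)) (hσc : ContinuousOn σ2 (Set.Ioi 0))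
    (hσpos : ∀ x ∈ Set.Ioi (0 : ℝ), 0 < σ2 x)
    (hδ : δ ∈ Set.Ioo (0 : ℝ) 1) (hxs : xs ∈ Set.Ioo (0 : ℝ) 1)
    (hb : ∀ x ∈ Set.Ioo (0 : ℝ) xs, b x ≤ (1 + δ) * c * x)
    (hσl : ∀ x ∈ Set.Ioo (0 : ℝ) xs, (1 - δ) * s ^ 2 * x ^ 2 ≤ σ2 x)
    (hσu : ∀ x ∈ Set.Ioo (0 : ℝ) xs, σ2 x ≤ (1 + δ) * s ^ 2 * x ^ 2)
    (hκ : κ = 2 * (1 + δ) * c / ((1 - δ) * s ^ 2)) (hκ1 : 1 < κ) :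
    (∀ x ∈ Set.Ioo (0 : ℝ) xs,
      (1 / ((1 + δ) * (κ - 1) * s ^ 2)) * (1 / x - x ^ (κ - 2) / xs ^ (κ - 1))
        ≤ -((1 / σ2 x) * ∫ y in (1 : ℝ)..x, Real.exp (2 * ∫ u in y..x, b u / σ2 u))) ∧
    ¬ IntegrableOn
      (fun x => (1 / σ2 x) * ∫ y in (1 : ℝ)..x, Real.exp (2 * ∫ u in y..x, b u / σ2 u))
      (Set.Ioo 0 xs) := by
  obtain ⟨hδ0, hδ1⟩ := hδ
  obtain ⟨hxs0, hxs1⟩ := hxs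
  -- basic positivity facts
  have hs2 : 0 < s ^ 2 := by
    by_contra h
    push_neg at h
    have hs0 : s ^ 2 = 0 := le_antisymm h (sq_nonneg s)
    rw [hs0, mul_zero, div_zero] at hκ
    linarith
  have hden : 0 < (1 - δ) * s ^ 2 := mul_pos (by linarith) hs2
  have hκ' : κ * ((1 - δ) * s ^ 2) = 2 * (1 + δ) * c := by
    rw [hκ, div_mul_cancel₀ _ hden.ne']
  have hc : 0 < c := by nlinarith [mul_pos (show (0:ℝ) < κ by linarith) hden]
  -- the ratio bound
  have hrat : ∀ u ∈ Set.Ioo (0 : ℝ) xs, b u / σ2 u ≤ κ / 2 * u⁻¹ := by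
    intro u hu
    have hu0 : 0 < u := hu.1
    have hσ : 0 < σ2 u := hσpos u hu0
    have hσl' := hσl u hu
    have hlow : 0 < (1 - δ) * s ^ 2 * u ^ 2 := by positivity
    have h1 : b u / σ2 u ≤ (1 + δ) * c * u / σ2 u :=
      div_le_div_of_nonneg_right (hb u hu) hσ.le
    have h2 : (1 + δ) * c * u / σ2 u ≤ (1 + δ) * c * u / ((1 - δ) * s ^ 2 * u ^ 2) :=
      div_le_div_of_nonneg_left (by positivity) hlow hσl'
    have h3 : (1 + δ) * c * u / ((1 - δ) * s ^ 2 * u ^ 2) = κ / 2 * u⁻¹ := by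
      field_simp
      rw [div_eq_iff hs2.ne']
      nlinarith [hκ']
    linarith
  -- continuity of the ratio
  set g : ℝ → ℝ := fun u => b u / σ2 u with hg
  have hgc : ContinuousOn g (Set.Ioi 0) :=
    hbc.div hσc fun u hu => (hσpos u hu).ne'
  have hgi : ∀ {p q : ℝ}, 0 < p → p ≤ q → IntervalIntegrable g volume p q := by
    intro p q hp hpq
    exact (hgc.mono (fun u hu => lt_of_lt_of_le hp hu.1)).intervalIntegrable_of_Icc hpq
  -- The main pointwise bound
  have main : ∀ x ∈ Set.Ioo (0 : ℝ) xs,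
      (1 / ((1 + δ) * (κ - 1) * s ^ 2)) * (1 / x - x ^ (κ - 2) / xs ^ (κ - 1))
        ≤ -((1 / σ2 x) * ∫ y in (1 : ℝ)..x, Real.exp (2 * ∫ u in y..x, b u / σ2 u)) := by
    intro x hx
    obtain ⟨hx0, hxxs⟩ := hx
    have hx1 : x < 1 := lt_trans hxxs hxs1
    have hσx : 0 < σ2 x := hσpos x hx0
    -- Lemma A: pointwise lower bound on the exponential
    have lemA : ∀ y ∈ Set.Icc x xs,
        x ^ κ * y ^ (-κ) ≤ Real.exp (2 * ∫ u in y..x, g u) := by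
      intro y hy
      have hy0 : 0 < y := lt_of_lt_of_le hx0 hy.1
      have hint1 : ∫ u in x..y, g u ≤ ∫ u in x..y, κ / 2 * u⁻¹ := by
        refine integral_mono_ae_restrict hy.1 (hgi hx0 hy.1)
          ((intervalIntegrable_inv (fun u hu => ?_) continuousOn_id).const_mul (κ/2)) ?_
        · rcases Set.mem_uIcc.mp hu with h | h
          · exact (lt_of_lt_of_le hx0 h.1).ne'
          · exact (lt_of_lt_of_le hy0 h.1).ne'
        · have hne : ∀ᵐ (u : ℝ), u ≠ xs := by
            rw [ae_iff]
            simp only [not_not, Set.setOf_eq_eq_singleton]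
            exact Real.volume_singleton
          filter_upwards [ae_restrict_mem measurableSet_Icc, ae_restrict_of_ae hne]
            with u hu hune
          refine hrat u ⟨lt_of_lt_of_le hx0 hu.1, lt_of_le_of_ne (le_trans hu.2 hy.2) ?_⟩
          exact hune
      have hint2 : ∫ u in x..y, κ / 2 * u⁻¹ = κ / 2 * (Real.log y - Real.log x) := by
        rw [intervalIntegral.integral_const_mul, integral_inv_of_pos hx0 hy0,
          Real.log_div hy0.ne' hx0.ne']
      have hsymm : ∫ u in y..x, g u = -∫ u in x..y, g u := integral_symm x y
      have hrpow : x ^ κ * y ^ (-κ) = Real.exp (κ * Real.log x - κ * Real.log y) := by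
        rw [Real.rpow_def_of_pos hx0, Real.rpow_def_of_pos hy0, ← Real.exp_add]
        ring_nf
      rw [hrpow]
      apply Real.exp_le_exp.mpr
      rw [hsymm]
      nlinarith [hint1, hint2]
    -- set up the outer integral
    set F : ℝ → ℝ := fun y => Real.exp (2 * ∫ u in y..x, g u) with hF
    have hFc : ContinuousOn F (Set.Icc x 1) := by
      have hP : ContinuousOn (fun y => ∫ u in x..y, g u) (Set.uIcc x 1) :=
        continuousOn_primitive_interval' (hgi hx0 hx1.le) Set.left_mem_uIcc
      rw [Set.uIcc_of_le hx1.le] at hP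
      have : ContinuousOn (fun y => Real.exp (2 * -(∫ u in x..y, g u))) (Set.Icc x 1) :=
        Real.continuous_exp.comp_continuousOn (continuousOn_const.mul hP.neg)
      refine this.congr fun y _ => ?_
      simp only [hF, integral_symm x y]
    have hFi1 : IntervalIntegrable F volume x 1 := hFc.intervalIntegrable_of_Icc hx1.le
    have hFixs : IntervalIntegrable F volume x xs := by
      refine hFi1.mono_set ?_
      rw [Set.uIcc_of_le hxxs.le, Set.uIcc_of_le hx1.le]
      exact Set.Icc_subset_Icc le_rfl hxs1.le
    have hFixs1 : IntervalIntegrable F volume xs 1 := by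
      refine hFi1.mono_set ?_
      rw [Set.uIcc_of_le hxs1.le, Set.uIcc_of_le hx1.le]
      exact Set.Icc_subset_Icc hxxs.le le_rfl
    have hsplit : ∫ y in x..(1:ℝ), F y = (∫ y in x..xs, F y) + ∫ y in xs..(1:ℝ), F y :=
      (integral_add_adjacent_intervals hFixs hFixs1).symm
    have htail : 0 ≤ ∫ y in xs..(1:ℝ), F y :=
      integral_nonneg hxs1.le fun y _ => (Real.exp_pos _).le
    -- the rpow comparison integral
    have hrpc : ContinuousOn (fun y : ℝ => x ^ κ * y ^ (-κ)) (Set.Icc x xs) := by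
      refine continuousOn_const.mul (ContinuousOn.rpow_const continuousOn_id fun y hy => ?_)
      exact Or.inl (lt_of_lt_of_le hx0 hy.1).ne'
    have hmono : ∫ y in x..xs, x ^ κ * y ^ (-κ) ≤ ∫ y in x..xs, F y :=
      integral_mono_on hxxs.le (hrpc.intervalIntegrable_of_Icc hxxs.le) hFixs lemA
    have hval : ∫ y in x..xs, x ^ κ * y ^ (-κ)
        = x ^ κ * ((xs ^ (-κ + 1) - x ^ (-κ + 1)) / (-κ + 1)) := by
      rw [intervalIntegral.integral_const_mul, integral_rpow]
      right
      constructor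
      · intro h; rw [neg_eq_iff_eq_neg] at h; linarith
      · rw [Set.uIcc_of_le hxxs.le]
        intro h
        exact absurd h.1 (not_le.mpr hx0)
    set N : ℝ := x ^ κ * ((xs ^ (-κ + 1) - x ^ (-κ + 1)) / (-κ + 1)) with hNdef
    have hsum : N ≤ ∫ y in x..(1:ℝ), F y := by
      rw [hsplit, ← hval]; linarith
    -- rpow algebra
    have e1 : x ^ κ = x * x ^ (κ - 1) := by
      rw [show κ = 1 + (κ - 1) by ring, Real.rpow_add hx0, Real.rpow_one]
      ring_nf
    have e2 : (x / xs) ^ (κ - 1) = x ^ (κ - 1) * xs ^ (1 - κ) := by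
      rw [Real.div_rpow hx0.le hxs0.le, show (1 - κ) = -(κ - 1) by ring,
        Real.rpow_neg hxs0.le, div_eq_mul_inv]
    have hfrac : (x / xs) ^ (κ - 1) ≤ 1 :=
      Real.rpow_le_one (by positivity) ((div_le_one hxs0).mpr hxxs.le) (by linarith)
    have hxx : x ^ κ * x ^ (1 - κ) = x := by
      rw [← Real.rpow_add hx0]; norm_num
    have hNform : N = (x - x ^ κ * xs ^ (1 - κ)) / (κ - 1) := by
      have hκne : (1:ℝ) - κ ≠ 0 := by intro h; linarith
      have hκne' : κ - 1 ≠ 0 := by intro h; linarith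
      rw [hNdef, show (-κ + 1) = 1 - κ by ring, mul_div_assoc',
        div_eq_div_iff hκne hκne']
      linear_combination (1 - κ) * hxx
    have hle : x ^ κ * xs ^ (1 - κ) ≤ x := by
      calc x ^ κ * xs ^ (1 - κ) = x * (x ^ (κ - 1) * xs ^ (1 - κ)) := by rw [e1]; ring
        _ = x * (x / xs) ^ (κ - 1) := by rw [e2]
        _ ≤ x * 1 := mul_le_of_le_one_right hx0.le hfrac |>.trans (by rw [mul_one])
        _ = x := mul_one x
    have hN0 : 0 ≤ N := by
      rw [hNform]
      apply div_nonneg (by linarith) (by linarith)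
    -- assemble
    have step1 : N / ((1 + δ) * s ^ 2 * x ^ 2) ≤ N / σ2 x :=
      div_le_div_of_nonneg_left hN0 hσx (hσu x ⟨hx0, hxxs⟩)
    have step2 : N / σ2 x ≤ (1 / σ2 x) * ∫ y in x..(1:ℝ), F y := by
      rw [div_eq_mul_inv, mul_comm, ← one_div]
      exact mul_le_mul_of_nonneg_left hsum (by positivity)
    have e3 : x ^ κ = x ^ (κ - 2) * x ^ 2 := by
      rw [show κ = (κ - 2) + 2 by ring, Real.rpow_add hx0]
      norm_num [Real.rpow_natCast]
    have e4 : xs ^ (1 - κ) = (xs ^ (κ - 1))⁻¹ := by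
      rw [show (1 - κ) = -(κ - 1) by ring, Real.rpow_neg hxs0.le]
    have hxsk : 0 < xs ^ (κ - 1) := Real.rpow_pos_of_pos hxs0 _
    have hCeq : (1 / ((1 + δ) * (κ - 1) * s ^ 2)) * (1 / x - x ^ (κ - 2) / xs ^ (κ - 1))
        = N / ((1 + δ) * s ^ 2 * x ^ 2) := by
      have hκne' : κ - 1 ≠ 0 := by intro h; linarith
      have h1δ : (1:ℝ) + δ ≠ 0 := by positivity
      rw [hNform, e3, e4]
      set t := x ^ (κ - 2) with hht
      set w := xs ^ (κ - 1) with hhw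
      have hw : w ≠ 0 := hxsk.ne'
      field_simp
    have hflip : -((1 / σ2 x) * ∫ y in (1:ℝ)..x, F y)
        = (1 / σ2 x) * ∫ y in x..(1:ℝ), F y := by
      rw [integral_symm]
      ring
    calc (1 / ((1 + δ) * (κ - 1) * s ^ 2)) * (1 / x - x ^ (κ - 2) / xs ^ (κ - 1))
        = N / ((1 + δ) * s ^ 2 * x ^ 2) := hCeq
      _ ≤ N / σ2 x := step1
      _ ≤ (1 / σ2 x) * ∫ y in x..(1:ℝ), F y := step2
      _ = -((1 / σ2 x) * ∫ y in (1:ℝ)..x, F y) := hflip.symm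
  refine ⟨main, ?_⟩
  -- non-integrability
  intro hInt
  have hC : 0 < 1 / ((1 + δ) * (κ - 1) * s ^ 2) :=
    div_pos one_pos (mul_pos (mul_pos (by linarith) (by linarith)) hs2)
  set C : ℝ := 1 / ((1 + δ) * (κ - 1) * s ^ 2) with hCdef
  have h1 : IntegrableOn (fun x : ℝ => x ^ (κ - 2)) (Set.Ioo 0 xs) := by
    have h := (intervalIntegrable_rpow' (show (-1:ℝ) < κ - 2 by linarith) (a := 0) (b := xs))
    exact h.1.mono_set Set.Ioo_subset_Ioc_self
  have hG : IntegrableOn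
      (fun x : ℝ => -((1 / σ2 x) * ∫ y in (1 : ℝ)..x,
          Real.exp (2 * ∫ u in y..x, b u / σ2 u)) / C
        + x ^ (κ - 2) / xs ^ (κ - 1)) (Set.Ioo 0 xs) :=
    (hInt.neg.div_const C).add (h1.div_const _)
  have hinv : IntegrableOn (fun x : ℝ => x⁻¹) (Set.Ioo 0 xs) := by
    refine hG.mono' measurable_inv.aestronglyMeasurable ?_
    filter_upwards [ae_restrict_mem measurableSet_Ioo] with x hx
    have hx0 : 0 < x := hx.1
    have hm := main x hx
    set J : ℝ := -((1 / σ2 x) * ∫ y in (1 : ℝ)..x,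
        Real.exp (2 * ∫ u in y..x, b u / σ2 u)) with hJ
    have h2 : x⁻¹ - x ^ (κ - 2) / xs ^ (κ - 1) ≤ J / C := by
      rw [le_div_iff₀ hC]
      have hm' : C * (1/x - x ^ (κ - 2) / xs ^ (κ - 1)) ≤ J := hm
      rw [one_div] at hm'
      nlinarith [hm']
    rw [Real.norm_eq_abs, abs_of_nonneg (inv_nonneg.mpr hx0.le)]
    linarith
  have : IntervalIntegrable (fun x : ℝ => x⁻¹) volume 0 xs := by
    rw [intervalIntegrable_iff_integrableOn_Ioo_of_le hxs0.le]
    exact hinv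
  rcases intervalIntegrable_inv_iff.mp this with h | h
  · exact absurd h.symm hxs0.ne'
  · exact h Set.left_mem_uIcc
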